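/- Let n ≥ 1 and suppose (a*, b*) is valid for the points (x_0,y_0),…,(x_n,y_n) and has minimal slope among all valid lines. Then the minimal-slope line is dominated by all valid lines to the right of the data: for every valid line (a,b) and every x ≥ x_n, a·x + b ≥ a*·x + b*. -/

import Mathlib

/-- A line `y = a·x + b` is valid for the points `(x j, y j)`, `0 ≤ j ≤ n`,
if every residual is within the threshold `ε`. -/
def IsValidLine (n : ℕ) (x y : ℕ → ℝ) (ε a b : ℝ) : Prop :=
  ∀ j ≤ n, |y j - (a * x j + b)| ≤ ε

/-- the minimal-slope valid line is dominated by every valid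
line to the right of the data. -/
theorem min_slope_line_dominated_right (n : ℕ) (hn : 1 ≤ n)
    (x y : ℕ → ℝ) (hx : ∀ i j : ℕ, i < j → j ≤ n → x i < x j)
    (ε : ℝ) (hε : 0 < ε) (aStar bStar : ℝ)
    (hvalid : IsValidLine n x y ε aStar bStar)
    (hmin : ∀ a b : ℝ, IsValidLine n x y ε a b → aStar ≤ a) :
    ∀ a b : ℝ, IsValidLine n x y ε a b →
      ∀ t : ℝ, x n ≤ t → aStar * t + bStar ≤ a * t + b := by
  intro a b hab t ht
  by_contra hcon
  push_neg at hcon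
  have ha : aStar ≤ a := hmin a b hab
  have hx0n : x 0 < x n := hx 0 n hn le_rfl
  set δ : ℝ := aStar * x n + bStar - (a * x n + b) with hδdef
  have hδpos : 0 < δ := by nlinarith
  set η : ℝ := δ / (2 * (x n - x 0)) with hηdef
  have hηpos : 0 < η := div_pos hδpos (by linarith)
  have hηbound : η * (x n - x 0) = δ / 2 := by
    have hne : x n - x 0 ≠ 0 := by linarith
    rw [hηdef]
    field_simp
  have hxj : ∀ j ≤ n, x 0 ≤ x j ∧ x j ≤ x n := by
    intro j hj
    constructor
    · rcases Nat.eq_zero_or_pos j with h | h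
      · simp [h]
      · exact (hx 0 j h hj).le
    · rcases eq_or_lt_of_le hj with h | h
      · simp [h]
      · exact (hx j n h le_rfl).le
  have hvalid' : IsValidLine n x y ε (aStar - η) (bStar + η * x 0) := by
    intro j hj
    obtain ⟨h0j, hjn⟩ := hxj j hj
    have h1 := abs_le.mp (hvalid j hj)
    have h2 := abs_le.mp (hab j hj)
    rw [abs_le]
    constructor
    · nlinarith [h1.1]
    · -- gap at x j is at least δ
      have hgap : δ ≤ (aStar - a) * x j + (bStar - b) := by nlinarith
      nlinarith [h2.2, hηbound, mul_le_mul_of_nonneg_left (sub_le_sub_right hjn (x 0)) hηpos.le]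
  have := hmin (aStar - η) (bStar + η * x 0) hvalid'
  linarith
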